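/- Let P be the 2×2 matrix with top-left entry 1 and all other entries 0, and let I be the 2×2 identity. Define V₁ := range(I ⊗ P) ⊂ ℝ⁴ and U₂ := ker(P ⊗ I) ⊂ ℝ⁴. Then for all X₁, X₂ ∈ GL₂(ℝ), the intersection (X₁ ⊗ X₂)V₁ ∩ U₂ is exactly one-dimensional. -/
import Mathlib


open Matrix Kronecker

private lemma kron_entry (A B : Matrix (Fin 2) (Fin 2) ℝ) (v : Fin 2 × Fin 2 → ℝ)
    (i j : Fin 2) :
    (A ⊗ₖ B).mulVecLin v (i, j) =
      A i 0 * B j 0 * v (0, 0) + A i 0 * B j 1 * v (0, 1)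
      + A i 1 * B j 0 * v (1, 0) + A i 1 * B j 1 * v (1, 1) := by
  simp only [Matrix.mulVecLin_apply, Matrix.mulVec, dotProduct,
    Fintype.sum_prod_type, Fin.sum_univ_two, Matrix.kroneckerMap_apply]
  ring

/-- Let `P = [[1,0],[0,0]]`, `I` the 2×2 identity, `V₁ := range(I ⊗ P) ⊂ ℝ⁴`,
`U₂ := ker(P ⊗ I) ⊂ ℝ⁴`. Then for all `X₁, X₂ ∈ GL₂(ℝ)` the subspace
`(X₁ ⊗ X₂)V₁ ∩ U₂` is exactly one-dimensional. -/
theorem kron_intersection_dim_one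
    (P : Matrix (Fin 2) (Fin 2) ℝ) (hP : P = !![(1 : ℝ), 0; 0, 0])
    (V₁ : Submodule ℝ (Fin 2 × Fin 2 → ℝ))
    (hV₁ : V₁ = LinearMap.range (Matrix.mulVecLin ((1 : Matrix (Fin 2) (Fin 2) ℝ) ⊗ₖ P)))
    (U₂ : Submodule ℝ (Fin 2 × Fin 2 → ℝ))
    (hU₂ : U₂ = LinearMap.ker (Matrix.mulVecLin (P ⊗ₖ (1 : Matrix (Fin 2) (Fin 2) ℝ))))
    (X₁ X₂ : Matrix (Fin 2) (Fin 2) ℝ) (hX₁ : IsUnit X₁) (hX₂ : IsUnit X₂) :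
    Module.finrank ℝ ↥(Submodule.map (Matrix.mulVecLin (X₁ ⊗ₖ X₂)) V₁ ⊓ U₂) = 1 := by
  subst hP hV₁ hU₂
  have hdet₁ : IsUnit X₁.det := (Matrix.isUnit_iff_isUnit_det X₁).mp hX₁
  have hdet₂ : IsUnit X₂.det := (Matrix.isUnit_iff_isUnit_det X₂).mp hX₂
  have hwne : X₂ 0 0 ≠ 0 ∨ X₂ 1 0 ≠ 0 := by
    by_contra h
    push_neg at h
    exact hdet₂.ne_zero (by simp [Matrix.det_fin_two, h.1, h.2])
  set v₀ : Fin 2 × Fin 2 → ℝ := fun p => if p.1 = 1 then X₂ p.2 0 else 0 with hv₀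
  have hv₀ne : v₀ ≠ 0 := by
    intro h
    rcases hwne with hw | hw
    · exact hw (by simpa [hv₀] using congrFun h (1, 0))
    · exact hw (by simpa [hv₀] using congrFun h (1, 1))
  have key : Submodule.map (Matrix.mulVecLin (X₁ ⊗ₖ X₂))
      (LinearMap.range (Matrix.mulVecLin ((1 : Matrix (Fin 2) (Fin 2) ℝ) ⊗ₖ !![(1:ℝ),0;0,0])))
      ⊓ LinearMap.ker (Matrix.mulVecLin (!![(1:ℝ),0;0,0] ⊗ₖ (1 : Matrix (Fin 2) (Fin 2) ℝ)))
      = Submodule.span ℝ {v₀} := by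
    apply le_antisymm
    · rintro v ⟨⟨z, ⟨x, rfl⟩, rfl⟩, hvU⟩
      rw [Submodule.mem_span_singleton]
      set z := Matrix.mulVecLin ((1 : Matrix (Fin 2) (Fin 2) ℝ) ⊗ₖ !![(1:ℝ),0;0,0]) x with hzdef
      have hz00 : z (0, 0) = x (0, 0) := by rw [hzdef, kron_entry]; norm_num
      have hz01 : z (0, 1) = 0 := by rw [hzdef, kron_entry]; norm_num
      have hz10 : z (1, 0) = x (1, 0) := by rw [hzdef, kron_entry]; norm_num
      have hz11 : z (1, 1) = 0 := by rw [hzdef, kron_entry]; norm_num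
      have hv : ∀ i j : Fin 2, Matrix.mulVecLin (X₁ ⊗ₖ X₂) z (i, j)
          = (X₁ i 0 * x (0, 0) + X₁ i 1 * x (1, 0)) * X₂ j 0 := by
        intro i j
        rw [kron_entry, hz00, hz01, hz10, hz11]; ring
      have hvU' : Matrix.mulVecLin (!![(1:ℝ),0;0,0] ⊗ₖ (1 : Matrix (Fin 2) (Fin 2) ℝ))
          (Matrix.mulVecLin (X₁ ⊗ₖ X₂) z) = 0 := LinearMap.mem_ker.mp hvU
      have h00 : Matrix.mulVecLin (X₁ ⊗ₖ X₂) z (0, 0) = 0 := by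
        have h := congrFun hvU' (0, 0)
        rw [kron_entry] at h
        simpa [Matrix.one_apply] using h
      have h01 : Matrix.mulVecLin (X₁ ⊗ₖ X₂) z (0, 1) = 0 := by
        have h := congrFun hvU' (0, 1)
        rw [kron_entry] at h
        simpa [Matrix.one_apply] using h
      have ha : X₁ 0 0 * x (0, 0) + X₁ 0 1 * x (1, 0) = 0 := by
        rcases hwne with hw | hw
        · have := h00; rw [hv 0 0] at this
          exact (mul_eq_zero.mp this).resolve_right hw
        · have := h01; rw [hv 0 1] at this
          exact (mul_eq_zero.mp this).resolve_right hw
      refine ⟨X₁ 1 0 * x (0, 0) + X₁ 1 1 * x (1, 0), ?_⟩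
      funext p
      obtain ⟨i, j⟩ := p
      rw [Pi.smul_apply, hv i j]
      fin_cases i
      · norm_num [hv₀]
        exact Or.inl ha
      · norm_num [hv₀]
    · rw [Submodule.span_le, Set.singleton_subset_iff]
      set u : Fin 2 → ℝ := X₁⁻¹.mulVec (Pi.single 1 1) with hu
      have hXu : X₁.mulVec u = Pi.single 1 1 := by
        rw [hu, Matrix.mulVec_mulVec, Matrix.mul_nonsing_inv _ hdet₁, Matrix.one_mulVec]
      have hXu0 : X₁ 0 0 * u 0 + X₁ 0 1 * u 1 = 0 := by
        have h := congrFun hXu 0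
        simpa [Matrix.mulVec, dotProduct, Fin.sum_univ_two] using h
      have hXu1 : X₁ 1 0 * u 0 + X₁ 1 1 * u 1 = 1 := by
        have h := congrFun hXu 1
        simpa [Matrix.mulVec, dotProduct, Fin.sum_univ_two] using h
      set z : Fin 2 × Fin 2 → ℝ := fun p => if p.2 = 0 then u p.1 else 0 with hz
      have hzval : z (0,0) = u 0 ∧ z (0,1) = 0 ∧ z (1,0) = u 1 ∧ z (1,1) = 0 := by
        refine ⟨?_, ?_, ?_, ?_⟩ <;> simp [hz]
      obtain ⟨hz00, hz01, hz10, hz11⟩ := hzval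
      constructor
      · refine ⟨z, ⟨z, ?_⟩, ?_⟩
        · funext p
          obtain ⟨i, j⟩ := p
          rw [kron_entry, hz00, hz01, hz10, hz11]
          fin_cases i <;> fin_cases j <;> norm_num [Matrix.one_apply, hz]
        · funext p
          obtain ⟨i, j⟩ := p
          rw [kron_entry, hz00, hz01, hz10, hz11]
          simp only [hv₀]
          fin_cases i
          · norm_num
            linear_combination (X₂ j 0) * hXu0
          · norm_num
            linear_combination (X₂ j 0) * hXu1
      · rw [SetLike.mem_coe, LinearMap.mem_ker]
        funext p
        obtain ⟨i, j⟩ := p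
        rw [kron_entry]
        simp only [hv₀]
        fin_cases i <;> norm_num [Matrix.one_apply]
  rw [key]
  exact finrank_span_singleton hv₀ne
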